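/- Let S = k[x_1,...,x_d] and let f^1,...,f^m be monomials (m ≥ 3). Set β_j = (f^{j,j+1}/f^{j+1})e_{j+1} − (f^{j,j+1}/f^j)e_j for 1 ≤ j ≤ m−1 and β_m = (f^{1,m}/f^m)e_m − (f^{1,m}/f^1)e_1, where f^{i,j} = lcm(f^i,f^j). Then the module of syzygies on β_1,...,β_m (the kernel of the map S^m → S^m sending ε_j ↦ β_j) is a free S-module of rank one, generated by σ_0 = −(L/f^{1,m})ε_m + Σ_{j=1}^{m−1} (L/f^{j,j+1})ε_j, where L = lcm(f^1,...,f^m). -/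

import Mathlib

open MvPolynomial

/-- A monomial with unit coefficient divides `g` iff it divides every monomial in the
support of `g`. -/
lemma aux_monomial_one_dvd_iff {K : Type*} [Field K] {d : ℕ} (u : Fin d →₀ ℕ)
    (g : MvPolynomial (Fin d) K) :
    monomial u (1 : K) ∣ g ↔ ∀ w ∈ g.support, u ≤ w := by
  rw [MvPolynomial.monomial_one_dvd_iff_modMonomial_eq_zero]
  constructor
  · intro h w hw
    by_contra hle
    have h2 := congrArg (coeff w) h
    rw [coeff_modMonomial_of_not_le _ hle] at h2
    simp only [coeff_zero] at h2
    exact (mem_support_iff.mp hw) h2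
  · intro h
    ext w
    by_cases hle : u ≤ w
    · simp [coeff_modMonomial_of_le _ hle]
    · rw [coeff_modMonomial_of_not_le _ hle, coeff_zero]
      by_contra hne
      exact hle (h w (mem_support_iff.mpr hne))

/-- Componentwise formula for the cyclic syzygy map. -/
lemma aux_comp {K : Type*} [Field K] {d m : ℕ} [NeZero m]
    (a : Fin m → (Fin d →₀ ℕ)) (s : Fin m → MvPolynomial (Fin d) K) (i : Fin m) :
    (Fintype.linearCombination (MvPolynomial (Fin d) K)
        (fun j : Fin m =>
          (Pi.single (j + 1) (monomial (a j ⊔ a (j + 1) - a (j + 1)) (1 : K))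
            - Pi.single j (monomial (a j ⊔ a (j + 1) - a j) (1 : K))
              : Fin m → MvPolynomial (Fin d) K)) s) i
      = s (i - 1) * monomial (a (i - 1) ⊔ a i - a i) (1 : K)
        - s i * monomial (a i ⊔ a (i + 1) - a i) (1 : K) := by
  classical
  rw [Fintype.linearCombination_apply]
  rw [Finset.sum_apply]
  have : ∀ j : Fin m, (s j • ((Pi.single (j + 1) (monomial (a j ⊔ a (j + 1) - a (j + 1)) (1 : K))
            - Pi.single j (monomial (a j ⊔ a (j + 1) - a j) (1 : K))
              : Fin m → MvPolynomial (Fin d) K))) i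
      = (if i = j + 1 then s j * monomial (a j ⊔ a (j + 1) - a (j + 1)) (1 : K) else 0)
        - (if i = j then s j * monomial (a j ⊔ a (j + 1) - a j) (1 : K) else 0) := by
    intro j
    simp only [Pi.smul_apply, Pi.sub_apply, Pi.single_apply, smul_eq_mul, mul_sub]
    split_ifs <;> simp
  rw [Finset.sum_congr rfl fun j _ => this j, Finset.sum_sub_distrib]
  congr 1
  · have hcong : ∀ j : Fin m,
        (if i = j + 1 then s j * monomial (a j ⊔ a (j + 1) - a (j + 1)) (1 : K) else 0)
          = (if i - 1 = j then s j * monomial (a j ⊔ a (j + 1) - a (j + 1)) (1 : K) else 0) := by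
      intro j
      congr 1
      simp [sub_eq_iff_eq_add]
    rw [Finset.sum_congr rfl fun j _ => hcong j, Finset.sum_ite_eq]
    simp [sub_add_cancel]
  · rw [Finset.sum_ite_eq]
    simp

theorem stmt2 {K : Type*} [Field K] (d m : ℕ) (hm : 3 ≤ m) [NeZero m]
    (a : Fin m → (Fin d →₀ ℕ)) :
    LinearMap.ker (Fintype.linearCombination (MvPolynomial (Fin d) K)
        (fun j : Fin m =>
          (Pi.single (j + 1) (monomial (a j ⊔ a (j + 1) - a (j + 1)) (1 : K))
            - Pi.single j (monomial (a j ⊔ a (j + 1) - a j) (1 : K))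
              : Fin m → MvPolynomial (Fin d) K))) =
      Submodule.span (MvPolynomial (Fin d) K)
        {fun j : Fin m =>
          monomial (Finset.univ.sup a - (a j ⊔ a (j + 1))) (1 : K)} ∧
    (fun j : Fin m => monomial (Finset.univ.sup a - (a j ⊔ a (j + 1))) (1 : K))
      ≠ (0 : Fin m → MvPolynomial (Fin d) K) := by
  classical
  set L := Finset.univ.sup a with hL
  set M : Fin m → (Fin d →₀ ℕ) := fun j => a j ⊔ a (j + 1) with hM
  have hML : ∀ j, M j ≤ L := fun j =>
    sup_le (Finset.le_sup (Finset.mem_univ j)) (Finset.le_sup (Finset.mem_univ (j + 1)))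
  have haM1 : ∀ j, a j ≤ M j := fun j => le_sup_left
  have haM2 : ∀ j, a (j + 1) ≤ M j := fun j => le_sup_right
  set σ : Fin m → MvPolynomial (Fin d) K := fun j => monomial (L - M j) (1 : K) with hσ
  constructor
  · apply le_antisymm
    · -- ker ⊆ span
      intro s hs
      rw [LinearMap.mem_ker] at hs
      have hkey : ∀ i : Fin m,
          s (i - 1) * monomial (M (i - 1) - a i) (1 : K)
            = s i * monomial (M i - a i) (1 : K) := by
        intro i
        have := congrFun hs i
        rw [aux_comp a s i] at this
        have h2 : a (i - 1) ⊔ a ((i - 1) + 1) = a (i - 1) ⊔ a i := by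
          rw [sub_add_cancel]
        rw [Pi.zero_apply, sub_eq_zero] at this
        simpa [hM, h2] using this
      set T : Fin m → MvPolynomial (Fin d) K := fun j => s j * monomial (M j) (1 : K) with hT
      have hTstep : ∀ i : Fin m, T (i - 1) = T i := by
        intro i
        have e1 : M (i - 1) = (M (i - 1) - a i) + a i := by
          have : a i ≤ M (i - 1) := by
            have := haM2 (i - 1); rwa [sub_add_cancel] at this
          rw [tsub_add_cancel_of_le this]
        have e2 : M i = (M i - a i) + a i := (tsub_add_cancel_of_le (haM1 i)).symm
        calc T (i - 1) = s (i - 1) * (monomial (M (i - 1) - a i) (1 : K) * monomial (a i) 1) := by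
              rw [hT]; rw [monomial_mul, one_mul, ← e1]
          _ = (s (i - 1) * monomial (M (i - 1) - a i) (1 : K)) * monomial (a i) 1 := by ring
          _ = (s i * monomial (M i - a i) (1 : K)) * monomial (a i) 1 := by rw [hkey i]
          _ = T i := by
              rw [hT, mul_assoc, monomial_mul, one_mul, ← e2]
      open Fin.NatCast in
      have hTnat : ∀ n : ℕ, T ((n : Fin m)) = T 0 := by
        intro n
        induction n with
        | zero => simp
        | succ n ih =>
          have := hTstep ((n : Fin m) + 1)
          rw [add_sub_cancel_right] at this
          rw [Nat.cast_add, Nat.cast_one, ← this, ih]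
      open Fin.NatCast in
      have hTall : ∀ j : Fin m, T j = T 0 := by
        intro j
        have := hTnat j.val
        rwa [Fin.cast_val_eq_self] at this
      set g := T 0 with hg
      have hdvd : monomial L (1 : K) ∣ g := by
        rw [aux_monomial_one_dvd_iff]
        intro w hw
        rw [hL]
        apply Finset.sup_le
        intro j _
        have hdj : monomial (M j) (1 : K) ∣ g := Dvd.intro_left (s j) (hTall j)
        have := (aux_monomial_one_dvd_iff (M j) g).mp hdj w hw
        exact le_trans (haM1 j) this
      obtain ⟨h, hgh⟩ := hdvd
      rw [Submodule.mem_span_singleton]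
      refine ⟨h, ?_⟩
      funext j
      have hmne : (monomial (M j) (1 : K) : MvPolynomial (Fin d) K) ≠ 0 := by
        simp [MvPolynomial.monomial_eq_zero]
      have hsj : s j * monomial (M j) (1 : K) = (h * σ j) * monomial (M j) (1 : K) := by
        calc s j * monomial (M j) (1 : K) = g := hTall j
          _ = monomial L 1 * h := hgh
          _ = (h * σ j) * monomial (M j) (1 : K) := by
              rw [hσ, mul_assoc, monomial_mul, one_mul, tsub_add_cancel_of_le (hML j)]
              ring
      have := mul_right_cancel₀ hmne hsj
      simp [this, hσ]
    · -- span ⊆ ker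
      rw [Submodule.span_le, Set.singleton_subset_iff]
      rw [SetLike.mem_coe, LinearMap.mem_ker]
      funext i
      rw [aux_comp a σ i]
      have hM1 : M (i - 1) = a (i - 1) ⊔ a i := by
        simp only [hM]; rw [sub_add_cancel]
      have hai1 : a i ≤ M (i - 1) := by
        have := haM2 (i - 1); rwa [sub_add_cancel] at this
      have e1 : σ (i - 1) * monomial (a (i - 1) ⊔ a i - a i) (1 : K) = monomial (L - a i) 1 := by
        rw [← hM1]
        simp only [hσ]
        rw [monomial_mul, one_mul, tsub_add_tsub_cancel (hML (i - 1)) hai1]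
      have e2 : σ i * monomial (a i ⊔ a (i + 1) - a i) (1 : K) = monomial (L - a i) 1 := by
        have hM2 : M i = a i ⊔ a (i + 1) := rfl
        rw [← hM2]
        simp only [hσ]
        rw [monomial_mul, one_mul, tsub_add_tsub_cancel (hML i) (haM1 i)]
      rw [e1, e2, sub_self, Pi.zero_apply]
  · intro h0
    have h1 : σ 0 = 0 := congrFun h0 0
    simp only [hσ] at h1
    simp [MvPolynomial.monomial_eq_zero] at h1
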